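/- For every η > 0 and every N ∈ ℕ, the deviation probability of the empirical sample complexity is bounded by P(|Ŝ^{(N)} − S| > η) ≤ (1/η)·∑_{t=1}^{T} |P(P̂_t^{(N)} < δ) − 𝟙[P_t < δ]|. -/

import Mathlib

open MeasureTheory ProbabilityTheory Filter

/-- **Deviation bound for the empirical sample complexity.**
With `P t = ℙ(V t 1 ≥ Vstar)`, `P̂ₜ⁽ᴺ⁾ = (1/N) ∑_{i=1}^N 𝟙[V t i ≥ Vstar]`,
`S = ∑_{t=1}^T 𝟙[P t < δ]`, and `Ŝ⁽ᴺ⁾ = ∑_{t=1}^T 𝟙[P̂ₜ⁽ᴺ⁾ < δ]`, for every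
`η > 0` and every `N`,
`P(|Ŝ⁽ᴺ⁾ − S| > η) ≤ (1/η) ∑_{t=1}^T |P(P̂ₜ⁽ᴺ⁾ < δ) − 𝟙[P t < δ]|`. -/
theorem empirical_sample_complexity_deviation_bound
    {Ω : Type*} [MeasurableSpace Ω] (μ : Measure Ω) [IsProbabilityMeasure μ]
    (T : ℕ) (Vstar : ℝ) (δ : ℝ) (hδ : δ ∈ Set.Ioc (0 : ℝ) 1)
    (V : ℕ → ℕ → Ω → ℝ)
    (hmeas : ∀ t i, Measurable (V t i))
    (hindep : ∀ t ∈ Finset.Icc 1 T,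
      iIndepFun (m := fun _ : ℕ => (inferInstance : MeasurableSpace ℝ)) (V t) μ)
    (hident : ∀ t ∈ Finset.Icc 1 T, ∀ i j : ℕ, IdentDistrib (V t i) (V t j) μ μ)
    (P : ℕ → ℝ) (hP : ∀ t, P t = (μ {ω | Vstar ≤ V t 1 ω}).toReal)
    (Phat : ℕ → ℕ → Ω → ℝ)
    (hPhat : ∀ t N ω, Phat t N ω
      = (1 / (N : ℝ)) * ∑ i ∈ Finset.Icc 1 N, (if Vstar ≤ V t i ω then (1 : ℝ) else 0))
    (S : ℝ) (hS : S = ∑ t ∈ Finset.Icc 1 T, (if P t < δ then (1 : ℝ) else 0))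
    (Shat : ℕ → Ω → ℝ)
    (hShat : ∀ N ω, Shat N ω
      = ∑ t ∈ Finset.Icc 1 T, (if Phat t N ω < δ then (1 : ℝ) else 0))
    (η : ℝ) (hη : 0 < η) (N : ℕ) :
    (μ {ω | η < |Shat N ω - S|}).toReal
      ≤ (1 / η) * ∑ t ∈ Finset.Icc 1 T,
          |(μ {ω | Phat t N ω < δ}).toReal - (if P t < δ then (1 : ℝ) else 0)| := by
  classical
  -- Measurability of the empirical probabilities
  have hPhatMeas : ∀ t, Measurable (Phat t N) := by
    intro t
    have hfun : Phat t N = fun ω =>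
        (1 / (N : ℝ)) * ∑ i ∈ Finset.Icc 1 N, (if Vstar ≤ V t i ω then (1 : ℝ) else 0) := by
      funext ω; exact hPhat t N ω
    rw [hfun]
    refine (Finset.measurable_sum _ fun i _ => ?_).const_mul _
    exact Measurable.ite (measurableSet_le measurable_const (hmeas t i))
      measurable_const measurable_const
  set A : ℕ → Set Ω := fun t => {ω | Phat t N ω < δ} with hA
  have hAmeas : ∀ t, MeasurableSet (A t) :=
    fun t => measurableSet_lt (hPhatMeas t) measurable_const
  set c : ℕ → ℝ := fun t => if P t < δ then (1 : ℝ) else 0 with hc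
  -- summand functions
  set h : ℕ → Ω → ℝ :=
    fun t ω => (if Phat t N ω < δ then (1 : ℝ) else 0) - c t with hh
  have h_ind : ∀ t ω, (if Phat t N ω < δ then (1 : ℝ) else 0)
      = Set.indicator (A t) (fun _ => (1 : ℝ)) ω := by
    intro t ω
    simp [Set.indicator_apply, hA, Set.mem_setOf_eq]
  have h_int : ∀ t, Integrable (h t) μ := by
    intro t
    have : Integrable (Set.indicator (A t) (fun _ => (1 : ℝ))) μ :=
      (integrable_const (1 : ℝ)).indicator (hAmeas t)
    have h1 : Integrable (fun ω => (if Phat t N ω < δ then (1 : ℝ) else 0)) μ := by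
      simpa [funext fun ω => h_ind t ω] using this
    exact h1.sub (integrable_const _)
  have habs_int : ∀ t, Integrable (fun ω => |h t ω|) μ := fun t => (h_int t).abs
  -- value of the integral of each |h t|
  have h_integral : ∀ t, ∫ ω, |h t ω| ∂μ = |(μ (A t)).toReal - c t| := by
    intro t
    by_cases hpt : P t < δ
    · have hc1 : c t = 1 := by simp [hc, hpt]
      have heq : (fun ω => |h t ω|) = Set.indicator (A t)ᶜ (1 : Ω → ℝ) := by
        funext ω
        by_cases hω : ω ∈ A t <;>
          simp [hh, h_ind t ω, Set.indicator_apply, hω, hc1]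
      rw [heq, integral_indicator_one (hAmeas t).compl, measureReal_def,
        prob_compl_eq_one_sub (hAmeas t)]
      have hle : μ (A t) ≤ 1 := prob_le_one
      have hleR : (μ (A t)).toReal ≤ 1 := by
        simpa using ENNReal.toReal_mono ENNReal.one_ne_top hle
      rw [ENNReal.toReal_sub_of_le hle ENNReal.one_ne_top, ENNReal.toReal_one, hc1]
      rw [abs_of_nonpos (by linarith)]
      ring
    · have hc0 : c t = 0 := by simp [hc, hpt]
      have heq : (fun ω => |h t ω|) = Set.indicator (A t) (1 : Ω → ℝ) := by
        funext ω
        by_cases hω : ω ∈ A t <;>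
          simp [hh, h_ind t ω, Set.indicator_apply, hω, hc0]
      rw [heq, integral_indicator_one (hAmeas t), measureReal_def, hc0, sub_zero,
        abs_of_nonneg ENNReal.toReal_nonneg]
  -- pointwise decomposition
  have hdecomp : ∀ ω, Shat N ω - S = ∑ t ∈ Finset.Icc 1 T, h t ω := by
    intro ω
    rw [hShat, hS, ← Finset.sum_sub_distrib]
  set F : Ω → ℝ := fun ω => |Shat N ω - S| with hF
  have hF_int : Integrable F μ := by
    have : Integrable (fun ω => Shat N ω - S) μ := by
      have : Integrable (fun ω => ∑ t ∈ Finset.Icc 1 T, h t ω) μ :=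
        integrable_finset_sum _ fun t _ => h_int t
      simpa [funext hdecomp] using this
    exact this.abs
  -- Markov's inequality
  have hmarkov := mul_meas_ge_le_integral_of_nonneg
    (ae_of_all μ fun ω => abs_nonneg (Shat N ω - S)) hF_int η
  have hsub : μ {ω | η < F ω} ≤ μ {ω | η ≤ F ω} :=
    measure_mono (Set.setOf_subset_setOf.2 fun ω hω => hω.le)
  have hsubR : (μ {ω | η < F ω}).toReal ≤ (μ {ω | η ≤ F ω}).toReal :=
    ENNReal.toReal_mono (measure_ne_top μ _) hsub
  -- bound the integral of F
  have hFle : ∫ ω, F ω ∂μ ≤ ∑ t ∈ Finset.Icc 1 T, |(μ (A t)).toReal - c t| := by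
    have hmono : ∫ ω, F ω ∂μ ≤ ∫ ω, ∑ t ∈ Finset.Icc 1 T, |h t ω| ∂μ := by
      refine integral_mono hF_int (integrable_finset_sum _ fun t _ => habs_int t) ?_
      intro ω
      rw [hF]
      calc |Shat N ω - S| = |∑ t ∈ Finset.Icc 1 T, h t ω| := by rw [hdecomp ω]
        _ ≤ ∑ t ∈ Finset.Icc 1 T, |h t ω| := Finset.abs_sum_le_sum_abs _ _
    calc ∫ ω, F ω ∂μ ≤ ∫ ω, ∑ t ∈ Finset.Icc 1 T, |h t ω| ∂μ := hmono
      _ = ∑ t ∈ Finset.Icc 1 T, ∫ ω, |h t ω| ∂μ :=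
          integral_finset_sum _ fun t _ => habs_int t
      _ = ∑ t ∈ Finset.Icc 1 T, |(μ (A t)).toReal - c t| := by
          exact Finset.sum_congr rfl fun t _ => h_integral t
  -- combine
  have hmain : (μ {ω | η < F ω}).toReal
      ≤ (1 / η) * ∑ t ∈ Finset.Icc 1 T, |(μ (A t)).toReal - c t| := by
    rw [div_mul_eq_mul_div, one_mul, le_div_iff₀ hη, mul_comm]
    calc η * (μ {ω | η < F ω}).toReal ≤ η * (μ {ω | η ≤ F ω}).toReal := by
          exact mul_le_mul_of_nonneg_left hsubR hη.le
      _ ≤ ∫ ω, F ω ∂μ := hmarkov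
      _ ≤ _ := hFle
  simpa [hF, hA, hc] using hmain
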